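/- Let F be a field of characteristic 2 with a 2-basis α₁,…,αₙ (n ≥ 2), i.e. F = F²(α₁,…,αₙ) with [F:F²] = 2ⁿ. For each nonzero d = (d₁,…,dₙ) ∈ {0,1}ⁿ set α^d = ∏αᵢ^{dᵢ} and let B_d = ⟨⟨α₁,…,α̂_ℓ,…,αₙ⟩⟩_b ⊗ ⟨⟨1+α^d⟩⟩_b where ℓ is the least index with d_ℓ = 1, and let B₀ = ⟨⟨α₁,…,αₙ⟩⟩_b. Then all 2ⁿ forms B_d are anisotropic and they have no common slot: there is no γ ∈ F× such that ⟨⟨γ⟩⟩_b is a factor of every B_d. -/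

import Mathlib

/-- The subfield of squares `F²` of a field of characteristic 2. -/
def sqSubfield (F : Type*) [Field F] [CharP F 2] : Subfield F where
  carrier := {x | ∃ y : F, y ^ 2 = x}
  mul_mem' := by rintro a b ⟨y, rfl⟩ ⟨z, rfl⟩; exact ⟨y * z, by ring⟩
  one_mem' := ⟨1, one_pow 2⟩
  add_mem' := by
    rintro a b ⟨y, rfl⟩ ⟨z, rfl⟩
    exact ⟨y + z, by rw [add_sq]; linear_combination (y*z) * (CharP.cast_eq_zero F 2)⟩
  zero_mem' := ⟨0, by ring⟩
  neg_mem' := by rintro a ⟨y, rfl⟩; exact ⟨y, (CharTwo.neg_eq _).symm⟩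
  inv_mem' := by rintro a ⟨y, rfl⟩; exact ⟨y⁻¹, by rw [inv_pow]⟩

/-- The monomial `β₁^{d₁} ⋯ βₙ^{dₙ}`. -/
def mono {R : Type*} [CommRing R] {n : ℕ} (β : Fin n → R) (d : Fin n → Bool) : R :=
  ∏ i, if d i then β i else 1

/-- The diagonal bilinear `n`-fold Pfister form `⟨⟨β₁,…,βₙ⟩⟩_b`. -/
def bPf (F : Type*) [Field F] {n : ℕ} (β : Fin n → F) (v w : (Fin n → Bool) → F) : F :=
  ∑ d, mono β d * v d * w d

/-- Pure part of the bilinear Pfister form. -/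
def bPfPure (F : Type*) [Field F] {n : ℕ} (β : Fin n → F)
    (v w : {d : Fin n → Bool // d ≠ fun _ => false} → F) : F :=
  ∑ d, mono β d.1 * v d * w d

/-- Anisotropy of a bilinear form. -/
def BAniso (F : Type*) [Field F] {V : Type*} [AddCommGroup V] [Module F V]
    (B : V → V → F) : Prop :=
  ∀ v : V, v ≠ 0 → B v v ≠ 0

/-- Isometry of bilinear forms. -/
def BilinIsom (F : Type*) [Field F] {V W : Type*} [AddCommGroup V] [Module F V]
    [AddCommGroup W] [Module F W] (B₁ : V → V → F) (B₂ : W → W → F) : Prop :=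
  ∃ e : V ≃ₗ[F] W, ∀ v w, B₂ (e v) (e w) = B₁ v w

/-- Isometry of quadratic forms (given as value functions). -/
def QuadIsom (F : Type*) [Field F] {V W : Type*} [AddCommGroup V] [Module F V]
    [AddCommGroup W] [Module F W] (q₁ : V → F) (q₂ : W → F) : Prop :=
  ∃ e : V ≃ₗ[F] W, ∀ v, q₂ (e v) = q₁ v

/-- The quadratic Pfister form `⟨⟨β₁,…,β_m, a]]` as a value function. -/
def qPf (R : Type*) [CommRing R] {m : ℕ} (β : Fin m → R) (a : R)
    (x : (Fin m → Bool) → R × R) : R :=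
  ∑ e, mono β e * ((x e).1 ^ 2 + (x e).1 * (x e).2 + a * (x e).2 ^ 2)

/-- Minimal index where `d` is `true`. -/
noncomputable def minIdx {n : ℕ} (d : Fin n → Bool) (hd : d ≠ fun _ => false) : Fin n :=
  (Finset.univ.filter fun i => d i = true).min' (by
    obtain ⟨i, hi⟩ := Function.ne_iff.mp hd
    exact ⟨i, Finset.mem_filter.mpr ⟨Finset.mem_univ i, by simpa using hi⟩⟩)

/-- Remove the `ℓ`-th entry from a tuple. -/
def removeIdx {R : Type*} {n : ℕ} (α : Fin n → R) (ℓ : Fin n) (i : Fin (n - 1)) : R :=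
  if h : (i : ℕ) < (ℓ : ℕ) then α ⟨i, by omega⟩ else α ⟨(i : ℕ) + 1, by omega⟩

/-- First `n-1` entries of a tuple. -/
def front {R : Type*} {n : ℕ} (α : Fin n → R) (i : Fin (n - 1)) : R :=
  α ⟨i, by omega⟩

/-- Last entry of a tuple (junk value `0` if the tuple is empty). -/
def qlast {R : Type*} [CommRing R] {n : ℕ} (α : Fin n → R) : R :=
  if h : n = 0 then 0 else α ⟨n - 1, by omega⟩

/-- The slot tuple of the form `B_d`: for `d = 0` it is `(α₁,…,αₙ)`; for `d ≠ 0`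
it is `(α₁,…,α̂_ℓ,…,αₙ, 1 + α^d)` (realized by replacing the entry `α_ℓ`, where
`ℓ` is minimal with `d_ℓ = 1`, by `1 + α^d`). -/
noncomputable def slotVec {F : Type*} [Field F] {n : ℕ} (α : Fin n → F)
    (d : Fin n → Bool) : Fin n → F :=
  if h : d = fun _ => false then α
  else Function.update α (minIdx d h) (1 + mono α d)

namespace Stmt5
open Finset

variable {F : Type*} [Field F] {n : ℕ}

lemma mono_allFalse {R : Type*} [CommRing R] (β : Fin n → R) :
    mono β (fun _ => false) = 1 := by simp [mono]

lemma mono_mul (α : Fin n → F) (e f : Fin n → Bool) :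
    mono α e * mono α f
      = mono α (fun i => e i && f i) ^ 2 * mono α (fun i => (e i).xor (f i)) := by
  simp only [mono, ← Finset.prod_mul_distrib, ← Finset.prod_pow]
  refine Finset.prod_congr rfl fun i _ => ?_
  rcases Bool.eq_false_or_eq_true (e i) with h1 | h1 <;>
    rcases Bool.eq_false_or_eq_true (f i) with h2 | h2 <;>
      simp only [h1, h2] <;> simp <;> ring

lemma mono_split (β : Fin n → F) (ℓ : Fin n) (f : Fin n → Bool) :
    mono β f = (if f ℓ then β ℓ else 1) * ∏ i ∈ univ.erase ℓ, (if f i then β i else 1) :=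
  (Finset.mul_prod_erase univ _ (mem_univ ℓ)).symm

lemma mono_update (α : Fin n → F) (ℓ : Fin n) (t : F) (f : Fin n → Bool) :
    mono (Function.update α ℓ t) f
      = (if f ℓ then t else 1) * mono α (Function.update f ℓ false) := by
  rw [mono_split _ ℓ f, (mono_split α ℓ (Function.update f ℓ false) : mono α _ = _)]
  simp only [Function.update_self, if_neg (by simp : ¬(false = true))]
  rw [one_mul]
  congr 1
  refine Finset.prod_congr rfl fun i hi => ?_
  rw [Function.update_of_ne (Finset.ne_of_mem_erase hi),
    Function.update_of_ne (Finset.ne_of_mem_erase hi)]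

lemma mono_ne_zero (α : Fin n → F) (hα : ∀ i, α i ≠ 0) (e : Fin n → Bool) :
    mono α e ≠ 0 := by
  refine Finset.prod_ne_zero_iff.mpr fun i _ => ?_
  rcases Bool.eq_false_or_eq_true (e i) with h | h <;> simp only [h] <;> simp [hα i]

lemma mono_single (α : Fin n → F) (i : Fin n) :
    mono α (Function.update (fun _ => false) i true) = α i := by
  rw [mono_split _ i]
  simp only [Function.update_self]
  rw [Finset.prod_eq_one fun j hj => by
    rw [Function.update_of_ne (Finset.ne_of_mem_erase hj)]; simp]
  simp

variable [CharP F 2]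

lemma sq_mem (z : F) : z ^ 2 ∈ sqSubfield F := ⟨z, rfl⟩

lemma smul_def (k : sqSubfield F) (z : F) : k • z = (k : F) * z := rfl

lemma algebraMap_eq (k : sqSubfield F) : algebraMap (sqSubfield F) F k = (k : F) := rfl

lemma span_mono_top (α : Fin n → F)
    (hadj : IntermediateField.adjoin (sqSubfield F) (Set.range α) = ⊤) :
    Submodule.span (sqSubfield F) (Set.range (mono α)) = ⊤ := by
  set K := sqSubfield F
  set M := Submodule.span K (Set.range (mono α)) with hM
  have h1 : (1 : F) ∈ M := by
    rw [← mono_allFalse α]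
    exact Submodule.subset_span ⟨_, rfl⟩
  have hmul : ∀ x ∈ M, ∀ y ∈ M, x * y ∈ M := by
    have : M * M ≤ M := by
      rw [hM, Submodule.span_mul_span]
      refine Submodule.span_le.mpr ?_
      rintro z ⟨x, ⟨e, rfl⟩, y, ⟨f, rfl⟩, rfl⟩
      show mono α e * mono α f ∈ M
      rw [mono_mul]
      exact M.smul_mem (⟨_, sq_mem (mono α (fun i => e i && f i))⟩ : K)
        (Submodule.subset_span ⟨_, rfl⟩)
    exact fun x hx y hy => this (Submodule.mul_mem_mul hx hy)
  set S : Subalgebra K F :=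
    { carrier := M
      mul_mem' := fun {a b} ha hb => hmul a ha b hb
      one_mem' := h1
      add_mem' := fun {a b} ha hb => M.add_mem ha hb
      zero_mem' := M.zero_mem
      algebraMap_mem' := fun k => by
        have h : (algebraMap K F) k = k • (1 : F) := by
          rw [smul_def, mul_one]; rfl
        rw [h]; exact M.smul_mem k h1 } with hS
  have halg : ∀ x ∈ Set.range α, IsAlgebraic K x := by
    rintro x ⟨i, rfl⟩
    refine ⟨Polynomial.X ^ 2 - Polynomial.C (⟨α i ^ 2, sq_mem _⟩ : K),
      Polynomial.X_pow_sub_C_ne_zero (by norm_num) _, ?_⟩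
    simp only [map_sub, Polynomial.aeval_X_pow, Polynomial.aeval_C]
    exact sub_eq_zero.mpr rfl
  have hAdj : Algebra.adjoin K (Set.range α) = ⊤ := by
    rw [← IntermediateField.adjoin_toSubalgebra_of_isAlgebraic halg, hadj,
      IntermediateField.top_toSubalgebra]
  have hle : Algebra.adjoin K (Set.range α) ≤ S := by
    refine Algebra.adjoin_le ?_
    rintro x ⟨i, rfl⟩
    show α i ∈ M
    rw [← mono_single α i]
    exact Submodule.subset_span ⟨_, rfl⟩
  rw [hAdj] at hle
  rw [eq_top_iff]
  exact fun x _ => hle Algebra.mem_top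

end Stmt5
namespace Stmt5
open Finset

variable {F : Type*} [Field F] [CharP F 2] {n : ℕ}

lemma d_minIdx {d : Fin n → Bool} (h : d ≠ fun _ => false) : d (minIdx d h) = true := by
  have h2 : minIdx d h ∈ Finset.univ.filter (fun i => d i = true) := Finset.min'_mem _ _
  exact (Finset.mem_filter.mp h2).2

lemma slotVec_zero (α : Fin n → F) : slotVec α (fun _ => false) = α := dif_pos rfl

lemma slotVec_ne (α : Fin n → F) {d : Fin n → Bool} (h : d ≠ fun _ => false) :
    slotVec α d = Function.update α (minIdx d h) (1 + mono α d) := dif_neg h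

lemma mono_slot_false (α : Fin n → F) {d : Fin n → Bool} (h : d ≠ fun _ => false)
    {f : Fin n → Bool} (hf : f (minIdx d h) = false) :
    mono (slotVec α d) f = mono α f := by
  rw [slotVec_ne α h, mono_update, hf, if_neg (by simp), one_mul,
    (by rw [← hf]; exact Function.update_eq_self _ f : Function.update f (minIdx d h) false = f)]

lemma bool_xor_cancel (a b : Bool) : a.xor (a.xor b) = b := by
  rcases Bool.eq_false_or_eq_true a with h | h <;>
    rcases Bool.eq_false_or_eq_true b with h2 | h2 <;> simp [h, h2]

lemma mono_slot_true (α : Fin n → F) {d : Fin n → Bool} (h : d ≠ fun _ => false)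
    {f : Fin n → Bool} (hf : f (minIdx d h) = true) :
    mono (slotVec α d) f
      = mono α (Function.update f (minIdx d h) false)
        + (mono α (fun i => d i && (Function.update f (minIdx d h) false) i)) ^ 2
          * mono α (fun i => (d i).xor (Function.update f (minIdx d h) false i)) := by
  rw [slotVec_ne α h, mono_update, hf, if_pos rfl, add_mul, one_mul, mono_mul]

variable (α : Fin n → F)
  (hadj : IntermediateField.adjoin (sqSubfield F) (Set.range α) = ⊤)
  (hrk : Module.finrank (sqSubfield F) F = 2 ^ n)

include hadj hrk

lemma card_eq : Fintype.card (Fin n → Bool) = Module.finrank (sqSubfield F) F := by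
  simp [Fintype.card_fun, hrk]

noncomputable def basisB : Module.Basis (Fin n → Bool) (sqSubfield F) F :=
  basisOfTopLeSpanOfCardEqFinrank (mono α) (span_mono_top α hadj).ge (card_eq α hadj hrk)

lemma basisB_coe : ⇑(basisB α hadj hrk) = mono α :=
  coe_basisOfTopLeSpanOfCardEqFinrank _ _ _

lemma alpha_ne_zero (i : Fin n) : α i ≠ 0 := by
  intro hzero
  have hne := (basisB α hadj hrk).ne_zero (Function.update (fun _ => false) i true)
  rw [basisB_coe, mono_single α i] at hne
  exact hne hzero

lemma span_slot_top (d : Fin n → Bool) :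
    Submodule.span (sqSubfield F) (Set.range (mono (slotVec α d))) = ⊤ := by
  by_cases hd : d = fun _ => false
  · rw [hd, slotVec_zero]; exact span_mono_top α hadj
  set K := sqSubfield F
  set ℓ := minIdx d hd with hℓ
  set M := Submodule.span K (Set.range (mono (slotVec α d))) with hM
  have hα : ∀ i, α i ≠ 0 := alpha_ne_zero α hadj hrk
  have hsub : Set.range (mono α) ⊆ (M : Set F) := by
    rintro _ ⟨g, rfl⟩
    by_cases hg : g ℓ = true
    · -- express mono α g via two slot monomials
      set e := fun i => (d i).xor (g i) with he
      have heℓ : e ℓ = false := by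
        rw [he]; simp only []
        rw [d_minIdx hd, hg]; rfl
      set f := Function.update e ℓ true with hf
      have hfℓ : f ℓ = true := Function.update_self _ _ _
      have hfe : Function.update f ℓ false = e := by
        rw [hf, Function.update_idem, ← heℓ, Function.update_eq_self]
      have hxe : (fun i => (d i).xor (e i)) = g := by
        funext i; rw [he]; exact bool_xor_cancel _ _
      have hcf : mono (slotVec α d) f
          = mono α e + (mono α (fun i => d i && e i)) ^ 2 * mono α g := by
        rw [mono_slot_true α hd hfℓ, hfe, hxe]
      have hce : mono (slotVec α d) e = mono α e := mono_slot_false α hd heℓ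
      set s := mono α (fun i => d i && e i) with hs
      have hs0 : s ≠ 0 := mono_ne_zero α hα _
      have hk0 : (⟨s ^ 2, sq_mem s⟩ : K) ≠ 0 := by
        intro hk
        exact hs0 (pow_eq_zero_iff (by norm_num : 2 ≠ 0) |>.mp (congrArg Subtype.val hk))
      have hmem : mono (slotVec α d) f + mono (slotVec α d) e ∈ M :=
        M.add_mem (Submodule.subset_span ⟨f, rfl⟩) (Submodule.subset_span ⟨e, rfl⟩)
      have hsum : mono (slotVec α d) f + mono (slotVec α d) e
          = (⟨s ^ 2, sq_mem s⟩ : K) • mono α g := by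
        rw [hcf, hce, smul_def]
        have h2 : mono α e + mono α e = 0 := CharTwo.add_self_eq_zero _
        push_cast
        linear_combination h2
      have : mono α g = (⟨s ^ 2, sq_mem s⟩ : K)⁻¹ • (mono (slotVec α d) f + mono (slotVec α d) e) := by
        rw [hsum, smul_smul, inv_mul_cancel₀ hk0, one_smul]
      rw [this]
      exact M.smul_mem _ hmem
    · have : mono (slotVec α d) g = mono α g :=
        mono_slot_false α hd (Bool.eq_false_iff.mpr hg)
      rw [← this]
      exact Submodule.subset_span ⟨g, rfl⟩
  rw [eq_top_iff, ← span_mono_top α hadj]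
  exact Submodule.span_le.mpr hsub

noncomputable def basisD (d : Fin n → Bool) : Module.Basis (Fin n → Bool) (sqSubfield F) F :=
  basisOfTopLeSpanOfCardEqFinrank (mono (slotVec α d)) (span_slot_top α hadj hrk d).ge
    (card_eq α hadj hrk)

lemma basisD_coe (d : Fin n → Bool) : ⇑(basisD α hadj hrk d) = mono (slotVec α d) :=
  coe_basisOfTopLeSpanOfCardEqFinrank _ _ _

lemma aniso_bPf (d : Fin n → Bool) : BAniso F (bPf F (slotVec α d)) := by
  intro v hv h0
  apply hv
  have key : ∑ f, (⟨v f ^ 2, sq_mem (v f)⟩ : sqSubfield F) • mono (slotVec α d) f = 0 := by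
    rw [← h0, bPf]
    exact Finset.sum_congr rfl fun f _ => by rw [smul_def]; push_cast; ring
  have li : LinearIndependent (sqSubfield F) (mono (slotVec α d)) := by
    rw [← basisD_coe α hadj hrk d]
    exact (basisD α hadj hrk d).linearIndependent
  have h2 := Fintype.linearIndependent_iff.mp li _ key
  funext f
  have h3 : v f ^ 2 = 0 := congrArg Subtype.val (h2 f)
  simpa using pow_eq_zero_iff (by norm_num : 2 ≠ 0) |>.mp h3

end Stmt5
namespace Stmt5
open Finset

variable {F : Type*} [Field F] [CharP F 2] {n : ℕ}

/-- delta vector -/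
def delta {m : ℕ} (F : Type*) [Field F] (g : Fin m → Bool) : (Fin m → Bool) → F :=
  fun f => if f = g then 1 else 0

lemma bPf_delta {m : ℕ} (β : Fin m → F) (g h : Fin m → Bool) :
    bPf F β (delta F g) (delta F h) = if g = h then mono β g else 0 := by
  rw [bPf]
  rw [Finset.sum_eq_single g]
  · by_cases hgh : g = h
    · subst hgh; simp [delta]
    · simp [delta, hgh, if_neg hgh]
  · intro f _ hfg
    simp [delta, hfg]
  · simp

lemma mono_cons_e1 {m : ℕ} (γ : F) (ψ : Fin m → F) :
    mono (Fin.cons γ ψ) (fun i => decide (i = 0)) = γ := by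
  rw [mono, Fin.prod_univ_succ]
  simp [Fin.succ_ne_zero]

lemma two_eq_zero : (2 : F) = 0 := CharTwo.two_eq_zero

lemma slot_extract (β : Fin n → F) (li : LinearIndependent (sqSubfield F) (mono β))
    {m : ℕ} (γ : F) (ψ : Fin m → F)
    (hiso : BilinIsom F (bPf F β) (bPf F (Fin.cons γ ψ))) :
    ∃ y : (Fin n → Bool) → F, y (fun _ => false) = 0 ∧
      ∑ f, mono β f * y f * y f = γ := by
  obtain ⟨e, he⟩ := hiso
  set e0 : Fin (m + 1) → Bool := fun _ => false with he0
  set e1 : Fin (m + 1) → Bool := fun i => decide (i = 0) with he1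
  have he01 : e0 ≠ e1 := by
    intro hq
    have := congrFun hq 0
    simp [he0, he1] at this
  set x := e.symm (delta F e0) with hxdef
  set y := e.symm (delta F e1) with hydef
  have hex : e x = delta F e0 := e.apply_symm_apply _
  have hey : e y = delta F e1 := e.apply_symm_apply _
  have hx : bPf F β x x = 1 := by
    rw [← he x x, hex, bPf_delta, if_pos rfl, mono_allFalse]
  have hy : bPf F β y y = γ := by
    rw [← he y y, hey, bPf_delta, if_pos rfl, he1, mono_cons_e1]
  have hxy : bPf F β x y = 0 := by
    rw [← he x y, hex, hey, bPf_delta, if_neg he01]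
  -- x is the basis vector at index 0
  have hxcoord : ∀ f, x f ^ 2 = if f = (fun _ => false) then 1 else 0 := by
    have hsum : ∑ f, ((⟨x f ^ 2, sq_mem (x f)⟩ : sqSubfield F)
        - (if f = (fun _ => false) then 1 else 0)) • mono β f = 0 := by
      simp only [sub_smul, Finset.sum_sub_distrib]
      rw [sub_eq_zero]
      have l1 : ∑ f, (⟨x f ^ 2, sq_mem (x f)⟩ : sqSubfield F) • mono β f = 1 := by
        rw [← hx, bPf]
        exact Finset.sum_congr rfl fun f _ => by rw [smul_def]; push_cast; ring
      have l2 : ∑ f : Fin n → Bool,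
          (if f = (fun _ => false) then (1 : sqSubfield F) else 0) • mono β f = 1 := by
        rw [Finset.sum_eq_single (fun _ => false : Fin n → Bool)]
        · rw [if_pos rfl, one_smul, mono_allFalse]
        · intro f _ hf; rw [if_neg hf, zero_smul]
        · simp
      rw [l1, l2]
    intro f
    have h0 := Fintype.linearIndependent_iff.mp li _ hsum f
    have h1 : (⟨x f ^ 2, sq_mem (x f)⟩ : sqSubfield F)
        = (if f = (fun _ => false) then 1 else 0) := sub_eq_zero.mp h0
    have := congrArg Subtype.val h1
    simpa [apply_ite (Subtype.val)] using this
  have hx0 : x (fun _ => false) = 1 := by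
    have h2 : x (fun _ => false) ^ 2 = 1 := by rw [hxcoord]; simp
    have h3 : (x (fun _ => false) + 1) ^ 2 = 0 := by
      have := two_eq_zero (F := F)
      linear_combination h2 + (x (fun _ => false)) * this + this
    have h4 := pow_eq_zero_iff (by norm_num : 2 ≠ 0) |>.mp h3
    have := two_eq_zero (F := F)
    linear_combination h4 - this
  have hxf : ∀ f, f ≠ (fun _ => false) → x f = 0 := by
    intro f hf
    have h2 : x f ^ 2 = 0 := by rw [hxcoord, if_neg hf]
    exact pow_eq_zero_iff (by norm_num : 2 ≠ 0) |>.mp h2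
  refine ⟨y, ?_, ?_⟩
  · rw [← hxy, bPf, Finset.sum_eq_single (fun _ => false : Fin n → Bool)]
    · rw [mono_allFalse, hx0]; ring
    · intro f _ hf; rw [hxf f hf]; ring
    · simp
  · rw [← hy, bPf]

end Stmt5
namespace Stmt5
open Finset

variable {F : Type*} [Field F] [CharP F 2] {n : ℕ}

lemma xor_false_eq {d : Fin n → Bool} :
    (fun i => (d i).xor ((fun _ => false) i)) = d := by
  funext i; exact Bool.xor_false _

lemma update_false_eq_zero_iff {f : Fin n → Bool} {ℓ : Fin n} (hf : f ℓ = true) :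
    Function.update f ℓ false = (fun _ => false)
      ↔ f = Function.update (fun _ => false) ℓ true := by
  constructor
  · intro h
    have h2 : Function.update (Function.update f ℓ false) ℓ true = f := by
      rw [Function.update_idem, ← hf, Function.update_eq_self]
    rw [← h2, h]
  · rintro rfl
    rw [Function.update_idem]
    exact funext fun i => by
      by_cases hi : i = ℓ
      · subst hi; simp
      · simp [Function.update_of_ne hi]

lemma update_dl_false {ℓ : Fin n} :
    Function.update (Function.update (fun _ => false) ℓ true) ℓ false
      = (fun _ => false : Fin n → Bool) := by
  rw [Function.update_idem]
  exact funext fun i => by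
    by_cases hi : i = ℓ
    · subst hi; simp
    · simp [Function.update_of_ne hi]

variable (α : Fin n → F)
  (hadj : IntermediateField.adjoin (sqSubfield F) (Set.range α) = ⊤)
  (hrk : Module.finrank (sqSubfield F) F = 2 ^ n)

include hadj hrk

lemma repr_sum_apply (c : (Fin n → Bool) → sqSubfield F) (j : Fin n → Bool) :
    (basisB α hadj hrk).repr (∑ f, c f • mono α f) j = c j := by
  have hc : ∀ f : Fin n → Bool, mono α f = basisB α hadj hrk f :=
    fun f => (congrFun (basisB_coe α hadj hrk) f).symm
  simp_rw [hc]
  rw [map_sum, Finsupp.finset_sum_apply]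
  simp_rw [map_smul, Finsupp.smul_apply, Module.Basis.repr_self, Finsupp.single_apply, smul_eq_mul]
  rw [Finset.sum_eq_single j]
  · simp
  · intro f _ hfj
    rw [if_neg hfj, mul_zero]
  · simp

lemma repr_gamma (γ : F) (y : (Fin n → Bool) → F)
    (hyγ : ∑ f, mono α f * y f * y f = γ) (j : Fin n → Bool) :
    (basisB α hadj hrk).repr γ j = (⟨y j ^ 2, sq_mem (y j)⟩ : sqSubfield F) := by
  have hγ : γ = ∑ f, (⟨y f ^ 2, sq_mem (y f)⟩ : sqSubfield F) • mono α f := by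
    rw [← hyγ]
    exact (Finset.sum_congr rfl fun f _ => by rw [smul_def]; push_cast; ring).symm
  rw [hγ, repr_sum_apply]

lemma key_zero (d : Fin n → Bool) (hd : d ≠ fun _ => false) (γ : F)
    (y : (Fin n → Bool) → F) (hy0 : y (fun _ => false) = 0)
    (hyγ : ∑ f, mono (slotVec α d) f * y f * y f = γ)
    (hk0 : (basisB α hadj hrk).repr γ (fun _ => false) = 0) :
    (basisB α hadj hrk).repr γ d = 0 := by
  set K := sqSubfield F
  set B := basisB α hadj hrk with hB
  set ℓ := minIdx d hd with hℓ
  set dl : Fin n → Bool := Function.update (fun _ => false) ℓ true with hdl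
  have hdlℓ : dl ℓ = true := Function.update_self _ _ _
  have hdℓtrue : d ℓ = true := by rw [hℓ]; exact d_minIdx hd
  have hcoe : ∀ f : Fin n → Bool, mono α f = B f :=
    fun f => (congrFun (basisB_coe α hadj hrk) f).symm
  have hγ : γ = ∑ f, (⟨y f ^ 2, sq_mem (y f)⟩ : K) • mono (slotVec α d) f := by
    rw [← hyγ]
    exact (Finset.sum_congr rfl fun f _ => by rw [smul_def]; push_cast; ring).symm
  have hrepr : ∀ j, B.repr γ j
      = ∑ f, (⟨y f ^ 2, sq_mem (y f)⟩ : K) * (B.repr (mono (slotVec α d) f)) j := by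
    intro j
    rw [hγ, map_sum, Finsupp.finset_sum_apply]
    exact Finset.sum_congr rfl fun f _ => by rw [map_smul, Finsupp.smul_apply, smul_eq_mul]
  have hval_false : ∀ f : Fin n → Bool, f ℓ = false →
      B.repr (mono (slotVec α d) f) = Finsupp.single f 1 := by
    intro f hf
    rw [mono_slot_false α hd hf, hcoe, Module.Basis.repr_self]
  have hval_true : ∀ f : Fin n → Bool, f ℓ = true →
      B.repr (mono (slotVec α d) f)
        = Finsupp.single (Function.update f ℓ false) 1
          + (⟨(mono α (fun i => d i && Function.update f ℓ false i)) ^ 2,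
              sq_mem _⟩ : K)
            • Finsupp.single (fun i => (d i).xor (Function.update f ℓ false i)) 1 := by
    intro f hf
    rw [mono_slot_true α hd hf]
    rw [show (mono α (fun i => d i && Function.update f ℓ false i)) ^ 2
          * mono α (fun i => (d i).xor (Function.update f ℓ false i))
        = (⟨(mono α (fun i => d i && Function.update f ℓ false i)) ^ 2, sq_mem _⟩ : K)
          • mono α (fun i => (d i).xor (Function.update f ℓ false i)) from rfl]
    rw [hcoe (Function.update f ℓ false),
      hcoe (fun i => (d i).xor (Function.update f ℓ false i)),
      map_add, map_smul, Module.Basis.repr_self, Module.Basis.repr_self]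
  -- auxiliary impossibilities
  have himp2 : ∀ f : Fin n → Bool, f ℓ = true →
      (fun i => (d i).xor (Function.update f ℓ false i)) ≠ (fun _ => false) := by
    intro f _ h
    have h2 := congrFun h ℓ
    simp only [Function.update_self] at h2
    rw [hdℓtrue] at h2
    simp at h2
  have himp3 : ∀ f : Fin n → Bool, f ℓ = true →
      Function.update f ℓ false ≠ d := by
    intro f _ h
    have h2 := congrFun h ℓ
    simp only [Function.update_self] at h2
    rw [hdℓtrue] at h2
    simp at h2
  -- step 1: coefficient at index 0
  have hstep1 : B.repr γ (fun _ => false) = (⟨y dl ^ 2, sq_mem (y dl)⟩ : K) := by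
    rw [hrepr, Finset.sum_eq_single dl]
    · rw [hval_true dl hdlℓ]
      rw [show Function.update dl ℓ false = (fun _ => false) from update_dl_false,
        xor_false_eq]
      rw [Finsupp.add_apply, Finsupp.smul_apply, Finsupp.single_apply, if_pos rfl,
        Finsupp.single_apply, if_neg hd, smul_zero, add_zero, mul_one]
    · intro f _ hfdl
      rcases Bool.eq_false_or_eq_true (f ℓ) with hf | hf
      · -- f ℓ = true
        rw [hval_true f hf, Finsupp.add_apply, Finsupp.smul_apply,
          Finsupp.single_apply, Finsupp.single_apply]
        rw [if_neg (fun h => hfdl ((update_false_eq_zero_iff hf).mp h)),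
          if_neg (himp2 f hf), smul_zero, add_zero, mul_zero]
      · -- f ℓ = false
        rw [hval_false f hf, Finsupp.single_apply]
        by_cases hf0 : f = (fun _ => false)
        · rw [if_pos hf0]
          have hyf : y f = 0 := by rw [hf0, hy0]
          rw [show (⟨y f ^ 2, sq_mem (y f)⟩ : K) = 0 from Subtype.ext (by
            push_cast; rw [hyf]; ring), zero_mul]
        · rw [if_neg hf0, mul_zero]
    · simp
  have hydl : (⟨y dl ^ 2, sq_mem (y dl)⟩ : K) = 0 := by rw [← hstep1, hk0]
  -- step 2: coefficient at index d
  rw [hrepr, Finset.sum_eq_single dl]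
  · rw [hydl, zero_mul]
  · intro f _ hfdl
    rcases Bool.eq_false_or_eq_true (f ℓ) with hf | hf
    · -- f ℓ = true
      rw [hval_true f hf, Finsupp.add_apply, Finsupp.smul_apply,
        Finsupp.single_apply, Finsupp.single_apply]
      rw [if_neg (himp3 f hf)]
      rw [if_neg (by
        intro h
        -- (fun i => d i ^^ update f ℓ false i) = d forces update f ℓ false = 0
        have hg0 : Function.update f ℓ false = (fun _ => false) := by
          funext i
          have h2 := congrFun h i
          rcases Bool.eq_false_or_eq_true (Function.update f ℓ false i) with hgi | hgi
          · rw [hgi] at h2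
            rcases Bool.eq_false_or_eq_true (d i) with hdi | hdi <;>
              rw [hdi] at h2 <;> simp_all
          · exact hgi
        exact hfdl ((update_false_eq_zero_iff hf).mp hg0))]
      rw [smul_zero, add_zero, mul_zero]
    · -- f ℓ = false
      rw [hval_false f hf, Finsupp.single_apply]
      rw [if_neg (by
        intro h
        rw [h, hdℓtrue] at hf
        simp at hf), mul_zero]
  · simp

end Stmt5

/-- the `2ⁿ` anisotropic bilinear `n`-fold Pfister forms `B_d` built
from a 2-basis `α₁,…,αₙ` have no common slot. -/
theorem stmt_5 (F : Type*) [Field F] [CharP F 2] (n : ℕ) (hn : 2 ≤ n)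
    (α : Fin n → F)
    (hadj : IntermediateField.adjoin (sqSubfield F) (Set.range α) = ⊤)
    (hrk : Module.finrank (sqSubfield F) F = 2 ^ n) :
    (∀ d : Fin n → Bool, BAniso F (bPf F (slotVec α d))) ∧
    ¬ ∃ γ : F, γ ≠ 0 ∧ ∀ d : Fin n → Bool,
        ∃ ψ : Fin (n - 1) → F, (∀ i, ψ i ≠ 0) ∧
          BilinIsom F (bPf F (slotVec α d)) (bPf F (Fin.cons γ ψ)) := by
  refine ⟨fun d => Stmt5.aniso_bPf α hadj hrk d, ?_⟩
  rintro ⟨γ, hγ, hcomm⟩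
  apply hγ
  have hdata : ∀ d : Fin n → Bool, ∃ y : (Fin n → Bool) → F,
      y (fun _ => false) = 0 ∧ ∑ f, mono (slotVec α d) f * y f * y f = γ := by
    intro d
    obtain ⟨ψ, _, hiso⟩ := hcomm d
    refine Stmt5.slot_extract (slotVec α d) ?_ γ ψ hiso
    rw [← Stmt5.basisD_coe α hadj hrk d]
    exact (Stmt5.basisD α hadj hrk d).linearIndependent
  obtain ⟨y0, hy00, hy0γ⟩ := hdata (fun _ => false)
  rw [Stmt5.slotVec_zero α] at hy0γ
  have hk0 : (Stmt5.basisB α hadj hrk).repr γ (fun _ => false) = 0 := by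
    rw [Stmt5.repr_gamma α hadj hrk γ y0 hy0γ]
    exact Subtype.ext (by push_cast; rw [hy00]; ring)
  have hall : ∀ j, (Stmt5.basisB α hadj hrk).repr γ j = 0 := by
    intro j
    by_cases hj : j = fun _ => false
    · rw [hj]; exact hk0
    · obtain ⟨y, hy0', hyγ'⟩ := hdata j
      exact Stmt5.key_zero α hadj hrk j hj γ y hy0' hyγ' hk0
  have hz : (Stmt5.basisB α hadj hrk).repr γ = 0 := Finsupp.ext hall
  exact ((Stmt5.basisB α hadj hrk).repr.map_eq_zero_iff).mp hz
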